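/- Fix p ∈ (0,1), q ∈ ℕ ∪ {0}, and i ∈ ℕ. For each n ≥ i, let a_{nij}, j ∈ [n], be independent identically distributed Bernoulli(p) random variables on a common probability space. Then (np)^{−1} Σ_{j=1}^n a_{nij} sin(2πq(j−i)/n) → 0 almost surely as n → ∞; that is, in the limit of large n the q-twisted states become steady states of the Kuramoto model on the Erdős–Rényi graph G(n,p) almost surely (Theorem 7.3). -/

import Mathlib

open MeasureTheory Filter

section Aux
open ProbabilityTheory

lemma sin_sum_zero (q i n : ℕ) (hn : 1 ≤ n) :
    ∑ j : Fin n, Real.sin (2 * Real.pi * q * (((j : ℕ) : ℝ) + 1 - i) / n) = 0 := by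
  have hn0 : (n : ℝ) ≠ 0 := Nat.cast_ne_zero.mpr (by omega)
  by_cases hdvd : n ∣ q
  · obtain ⟨m, rfl⟩ := hdvd
    refine Finset.sum_eq_zero fun j _ => ?_
    have harg : 2 * Real.pi * ((n * m : ℕ) : ℝ) * (((j : ℕ) : ℝ) + 1 - i) / n
        = ((2 * (m : ℤ) * (((j : ℕ) : ℤ) + 1 - (i : ℤ)) : ℤ) : ℝ) * Real.pi := by
      push_cast
      field_simp
    rw [harg, Real.sin_int_mul_pi]
  · set d : ℝ := 2 * Real.pi * q / n with hd
    set c : ℝ := 2 * Real.pi * q * (1 - (i : ℝ)) / n with hc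
    set w : ℂ := Complex.exp (d * Complex.I) with hw
    have hw1 : w ≠ 1 := by
      intro h
      rw [hw, Complex.exp_eq_one_iff] at h
      obtain ⟨k, hk⟩ := h
      have hk' : (d : ℂ) = (k : ℂ) * (2 * (Real.pi : ℂ)) := by
        have h2 : (d : ℂ) * Complex.I = ((k : ℂ) * (2 * (Real.pi : ℂ))) * Complex.I := by
          rw [hk]; ring
        exact mul_right_cancel₀ Complex.I_ne_zero h2
      have hdk : d = (k : ℝ) * (2 * Real.pi) := by exact_mod_cast hk'
      have hq : (q : ℝ) = (k : ℝ) * n := by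
        rw [hd] at hdk
        have hpi : (Real.pi : ℝ) ≠ 0 := Real.pi_ne_zero
        field_simp at hdk
        nlinarith [Real.pi_pos]
      have hqz : (q : ℤ) = k * n := by exact_mod_cast hq
      exact hdvd (Int.natCast_dvd_natCast.mp ⟨k, by rw [hqz]; ring⟩)
    have key : ∀ j : Fin n,
        Real.sin (2 * Real.pi * q * (((j : ℕ) : ℝ) + 1 - i) / n)
        = (Complex.exp ((c : ℝ) * Complex.I) * w ^ (j : ℕ)).im := by
      intro j
      rw [hw, ← Complex.exp_nat_mul, ← Complex.exp_add,
        ← Complex.exp_ofReal_mul_I_im]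
      congr 2
      rw [hc, hd]
      push_cast
      field_simp
      ring
    have hwn : w ^ n = 1 := by
      have hnd : (n : ℝ) * d = 2 * Real.pi * q := by rw [hd]; field_simp
      have harg : (n : ℂ) * ((d : ℝ) * Complex.I)
          = (q : ℂ) * (2 * (Real.pi : ℂ) * Complex.I) := by
        calc (n : ℂ) * ((d : ℝ) * Complex.I)
            = (((n : ℝ) * d : ℝ) : ℂ) * Complex.I := by push_cast; ring
          _ = (q : ℂ) * (2 * (Real.pi : ℂ) * Complex.I) := by rw [hnd]; push_cast; ring
      rw [hw, ← Complex.exp_nat_mul, harg]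
      exact Complex.exp_nat_mul_two_pi_mul_I q
    calc ∑ j : Fin n, Real.sin (2 * Real.pi * q * (((j : ℕ) : ℝ) + 1 - i) / n)
        = (∑ j : Fin n, Complex.exp ((c : ℝ) * Complex.I) * w ^ (j : ℕ)).im := by
          rw [Complex.im_sum]; exact Finset.sum_congr rfl fun j _ => key j
      _ = 0 := by
          rw [← Finset.mul_sum, Fin.sum_univ_eq_sum_range (fun k => w ^ k) n,
            geom_sum_eq hw1, hwn]
          simp

variable {Ω : Type*} [MeasurableSpace Ω] {μ : Measure Ω} [IsProbabilityMeasure μ]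

lemma aux_integrable {f : Ω → ℝ} (hf : Measurable f) {C : ℝ} (h : ∀ ω, |f ω| ≤ C) :
    Integrable f μ :=
  (integrable_const C).mono' hf.aestronglyMeasurable (ae_of_all _ fun ω => by simpa using h ω)

lemma moment_bound {ι : Type*} {Y : ι → Ω → ℝ}
    (hm : ∀ j, Measurable (Y j)) (hb : ∀ j ω, |Y j ω| ≤ 1)
    (hz : ∀ j, ∫ ω, Y j ω ∂μ = 0)
    (hind : iIndepFun Y μ) (s : Finset ι) :
    (∫ ω, (∑ j ∈ s, Y j ω) ^ 2 ∂μ) ≤ (s.card : ℝ) ∧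
    (∫ ω, (∑ j ∈ s, Y j ω) ^ 4 ∂μ) ≤ 3 * (s.card : ℝ) ^ 2 + (s.card : ℝ) := by
  classical
  induction s using Finset.cons_induction with
  | empty => simp
  | cons a s ha ih =>
    set A : Ω → ℝ := Y a with hA
    set S : Ω → ℝ := fun ω => ∑ j ∈ s, Y j ω with hS
    have measS : Measurable S := by
      exact Finset.measurable_sum s fun j _ => hm j
    have boundS : ∀ ω, |S ω| ≤ (s.card : ℝ) := by
      intro ω
      calc |S ω| ≤ ∑ j ∈ s, |Y j ω| := Finset.abs_sum_le_sum_abs _ _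
        _ ≤ ∑ j ∈ s, 1 := Finset.sum_le_sum fun j _ => hb j ω
        _ = (s.card : ℝ) := by simp
    have boundA : ∀ ω, |A ω| ≤ 1 := hb a
    -- integrability of A^m * S^k
    have iAS : ∀ m k : ℕ, Integrable (fun ω => A ω ^ m * S ω ^ k) μ := by
      intro m k
      refine aux_integrable (((hm a).pow_const m).mul (measS.pow_const k))
        (C := 1 * (s.card : ℝ) ^ k) fun ω => ?_
      rw [abs_mul, abs_pow, abs_pow]
      exact mul_le_mul (pow_le_one₀ (abs_nonneg _) (boundA ω))
        (pow_le_pow_left₀ (abs_nonneg _) (boundS ω) k)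
        (pow_nonneg (abs_nonneg _) k) zero_le_one
    have iA : ∀ m : ℕ, Integrable (fun ω => A ω ^ m) μ := by
      intro m; simpa using iAS m 0
    have iS : ∀ k : ℕ, Integrable (fun ω => S ω ^ k) μ := by
      intro k; simpa using iAS 0 k
    -- independence of A and S
    have indepSA : IndepFun (∑ j ∈ s, Y j) A μ :=
      hind.indepFun_finsetSum_of_notMem hm ha
    have indepAS : IndepFun A S μ := by
      have : S = ∑ j ∈ s, Y j := by funext ω; simp [hS, Finset.sum_apply]
      rw [this]; exact indepSA.symm
    have cross : ∀ m k : ℕ,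
        (∫ ω, A ω ^ m * S ω ^ k ∂μ) = (∫ ω, A ω ^ m ∂μ) * ∫ ω, S ω ^ k ∂μ := by
      intro m k
      have h := (indepAS.comp (measurable_id.pow_const m)
        (measurable_id.pow_const k)).integral_fun_mul_eq_mul_integral (iA m).aestronglyMeasurable (iS k).aestronglyMeasurable
      simpa using h
    -- basic moments
    have EA1 : ∫ ω, A ω ∂μ = 0 := hz a
    have ES1 : ∫ ω, S ω ∂μ = 0 := by
      rw [hS, integral_finset_sum s fun j _ => aux_integrable (hm j) (hb j)]
      exact Finset.sum_eq_zero fun j _ => hz j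
    have EA2 : ∫ ω, A ω ^ 2 ∂μ ≤ 1 := by
      calc ∫ ω, A ω ^ 2 ∂μ ≤ ∫ _ω, (1 : ℝ) ∂μ := by
            refine integral_mono (iA 2) (integrable_const 1) fun ω => ?_
            calc A ω ^ 2 = |A ω| ^ 2 := by rw [sq_abs]
              _ ≤ 1 := pow_le_one₀ (abs_nonneg _) (boundA ω)
        _ = 1 := by simp
    have EA4 : ∫ ω, A ω ^ 4 ∂μ ≤ 1 := by
      calc ∫ ω, A ω ^ 4 ∂μ ≤ ∫ _ω, (1 : ℝ) ∂μ := by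
            refine integral_mono (iA 4) (integrable_const 1) fun ω => ?_
            calc A ω ^ 4 = |A ω| ^ 4 := by rw [← abs_pow, abs_of_nonneg (by positivity)]
              _ ≤ 1 := pow_le_one₀ (abs_nonneg _) (boundA ω)
        _ = 1 := by simp
    have EA2nn : 0 ≤ ∫ ω, A ω ^ 2 ∂μ := integral_nonneg fun ω => sq_nonneg _
    have ES2nn : 0 ≤ ∫ ω, S ω ^ 2 ∂μ := integral_nonneg fun ω => sq_nonneg _
    have ES4nn : 0 ≤ ∫ ω, S ω ^ 4 ∂μ := integral_nonneg fun ω => by positivity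
    -- expansions
    have sum_eq : ∀ ω, ∑ j ∈ Finset.cons a s ha, Y j ω = A ω + S ω := by
      intro ω; rw [Finset.sum_cons]
    have exp2 : (∫ ω, (∑ j ∈ Finset.cons a s ha, Y j ω) ^ 2 ∂μ)
        = (∫ ω, A ω ^ 2 ∂μ) + 2 * ((∫ ω, A ω ∂μ) * ∫ ω, S ω ∂μ)
          + ∫ ω, S ω ^ 2 ∂μ := by
      have e : ∀ ω, (∑ j ∈ Finset.cons a s ha, Y j ω) ^ 2
          = A ω ^ 2 + 2 * (A ω ^ 1 * S ω ^ 1) + S ω ^ 2 := by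
        intro ω; rw [sum_eq ω]; ring
      have i21 : Integrable (fun ω => A ω ^ 2 + 2 * (A ω ^ 1 * S ω ^ 1)) μ :=
        (iA 2).add ((iAS 1 1).const_mul 2)
      rw [integral_congr_ae (ae_of_all _ e), integral_add i21 (iS 2),
        integral_add (iA 2) ((iAS 1 1).const_mul 2), integral_const_mul, cross 1 1]
      simp
    have exp4 : (∫ ω, (∑ j ∈ Finset.cons a s ha, Y j ω) ^ 4 ∂μ)
        = (∫ ω, A ω ^ 4 ∂μ) + 4 * ((∫ ω, A ω ^ 3 ∂μ) * ∫ ω, S ω ∂μ)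
          + 6 * ((∫ ω, A ω ^ 2 ∂μ) * ∫ ω, S ω ^ 2 ∂μ)
          + 4 * ((∫ ω, A ω ∂μ) * ∫ ω, S ω ^ 3 ∂μ)
          + ∫ ω, S ω ^ 4 ∂μ := by
      have e : ∀ ω, (∑ j ∈ Finset.cons a s ha, Y j ω) ^ 4
          = A ω ^ 4 + 4 * (A ω ^ 3 * S ω ^ 1) + 6 * (A ω ^ 2 * S ω ^ 2)
            + 4 * (A ω ^ 1 * S ω ^ 3) + S ω ^ 4 := by
        intro ω; rw [sum_eq ω]; ring
      have i41 : Integrable (fun ω => A ω ^ 4 + 4 * (A ω ^ 3 * S ω ^ 1)) μ :=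
        (iA 4).add ((iAS 3 1).const_mul 4)
      have i42 : Integrable (fun ω => A ω ^ 4 + 4 * (A ω ^ 3 * S ω ^ 1)
          + 6 * (A ω ^ 2 * S ω ^ 2)) μ := i41.add ((iAS 2 2).const_mul 6)
      have i43 : Integrable (fun ω => A ω ^ 4 + 4 * (A ω ^ 3 * S ω ^ 1)
          + 6 * (A ω ^ 2 * S ω ^ 2) + 4 * (A ω ^ 1 * S ω ^ 3)) μ :=
        i42.add ((iAS 1 3).const_mul 4)
      rw [integral_congr_ae (ae_of_all _ e), integral_add i43 (iS 4),
        integral_add i42 ((iAS 1 3).const_mul 4),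
        integral_add i41 ((iAS 2 2).const_mul 6),
        integral_add (iA 4) ((iAS 3 1).const_mul 4),
        integral_const_mul, integral_const_mul, integral_const_mul,
        cross 3 1, cross 2 2, cross 1 3]
      simp
    constructor
    · rw [exp2, EA1, ES1]
      have := ih.1
      rw [Finset.card_cons]
      push_cast
      linarith [EA2]
    · rw [exp4, EA1, ES1]
      have h1 := ih.1
      have h2 := ih.2
      have hmul : (∫ ω, A ω ^ 2 ∂μ) * (∫ ω, S ω ^ 2 ∂μ) ≤ 1 * (s.card : ℝ) :=
        mul_le_mul EA2 h1 ES2nn zero_le_one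
      rw [Finset.card_cons]
      push_cast
      nlinarith [EA4, h2, Nat.cast_nonneg (α := ℝ) s.card]

lemma integral_bernoulli {f : Ω → ℝ} (hf : Measurable f) (h01 : ∀ ω, f ω = 0 ∨ f ω = 1)
    {p : ℝ} (hp0 : 0 ≤ p) (hp : μ {ω | f ω = 1} = ENNReal.ofReal p) :
    ∫ ω, f ω ∂μ = p := by
  have hset : MeasurableSet {ω | f ω = 1} := hf (measurableSet_singleton 1)
  have hfi : ∀ ω, f ω = Set.indicator {ω | f ω = 1} (fun _ => (1 : ℝ)) ω := by
    intro ω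
    rcases h01 ω with h | h <;> simp [Set.indicator_apply, h]
  rw [integral_congr_ae (ae_of_all _ hfi), integral_indicator_const (1 : ℝ) hset, measureReal_def, hp,
    ENNReal.toReal_ofReal hp0]
  simp

lemma markov4 {S : Ω → ℝ} {M : ℝ} (hint : Integrable (fun ω => S ω ^ 4) μ)
    (hmom : ∫ ω, S ω ^ 4 ∂μ ≤ M) (b : ℝ) (hb : 0 < b) :
    μ {ω | b ≤ |S ω|} ≤ ENNReal.ofReal (M / b ^ 4) := by
  have hsub : {ω | b ≤ |S ω|} ⊆ {ω | b ^ 4 ≤ S ω ^ 4} := by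
    intro ω h
    have h' : b ^ 4 ≤ |S ω| ^ 4 := pow_le_pow_left₀ hb.le h 4
    rwa [← abs_pow, abs_of_nonneg (by positivity : (0:ℝ) ≤ S ω ^ 4)] at h'
  have hmar := mul_meas_ge_le_integral_of_nonneg
    (ae_of_all μ fun ω => by positivity : 0 ≤ᵐ[μ] fun ω => S ω ^ 4) hint (b ^ 4)
  have hb4 : (0:ℝ) < b ^ 4 := by positivity
  have h1 : (μ {ω | b ^ 4 ≤ S ω ^ 4}).toReal ≤ M / b ^ 4 := by
    rw [le_div_iff₀ hb4]
    calc (μ {ω | b ^ 4 ≤ S ω ^ 4}).toReal * b ^ 4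
        = b ^ 4 * (μ {ω | b ^ 4 ≤ S ω ^ 4}).toReal := by ring
      _ ≤ ∫ ω, S ω ^ 4 ∂μ := hmar
      _ ≤ M := hmom
  calc μ {ω | b ≤ |S ω|} ≤ μ {ω | b ^ 4 ≤ S ω ^ 4} := measure_mono hsub
    _ = ENNReal.ofReal ((μ {ω | b ^ 4 ≤ S ω ^ 4}).toReal) :=
        (ENNReal.ofReal_toReal (measure_ne_top μ _)).symm
    _ ≤ ENNReal.ofReal (M / b ^ 4) := ENNReal.ofReal_le_ofReal h1

end Aux

theorem twisted_states_almost_sure_steady_states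
    {Ω : Type*} [MeasurableSpace Ω] (ℙ : Measure Ω) [IsProbabilityMeasure ℙ]
    (p : ℝ) (hp : p ∈ Set.Ioo (0 : ℝ) 1)
    (q : ℕ) (i : ℕ) (hi : 1 ≤ i)
    (a : (n : ℕ) → Fin n → Ω → ℝ)
    (hmeas : ∀ (n : ℕ), i ≤ n → ∀ j : Fin n, Measurable (a n j))
    (h01 : ∀ (n : ℕ), i ≤ n → ∀ (j : Fin n) (ω : Ω), a n j ω = 0 ∨ a n j ω = 1)
    (hbern : ∀ (n : ℕ), i ≤ n → ∀ j : Fin n, ℙ {ω | a n j ω = 1} = ENNReal.ofReal p)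
    (hind : ∀ (n : ℕ), i ≤ n →
      ProbabilityTheory.iIndepFun (a n) ℙ) :
    ∀ᵐ ω ∂ℙ, Filter.Tendsto (fun n : ℕ =>
      ((n : ℝ) * p)⁻¹ * ∑ j : Fin n,
        a n j ω * Real.sin (2 * Real.pi * q * (((j : ℕ) : ℝ) + 1 - i) / n))
      Filter.atTop (nhds 0) := by
  obtain ⟨hp0, hp1⟩ := hp
  set cst : ℕ → ℕ → ℝ :=
    fun n j => Real.sin (2 * Real.pi * q * ((j : ℝ) + 1 - i) / n) with hcst
  set T : ℕ → Ω → ℝ := fun n ω => ∑ j : Fin n, (a n j ω - p) * cst n j with hT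
  -- the deterministic part of the sum vanishes
  have hTf : ∀ n : ℕ, 1 ≤ n → ∀ ω,
      ∑ j : Fin n, a n j ω * cst n (j : ℕ) = T n ω := by
    intro n hn ω
    have h1 : T n ω = ∑ j : Fin n, a n j ω * cst n (j : ℕ) - p * ∑ j : Fin n, cst n (j : ℕ) := by
      rw [hT, Finset.mul_sum, ← Finset.sum_sub_distrib]
      exact Finset.sum_congr rfl fun j _ => by ring
    have h2 : ∑ j : Fin n, cst n (j : ℕ) = 0 := sin_sum_zero q i n hn
    rw [h1, h2]
    ring
  -- bounds on the centered variables
  have habs : ∀ n : ℕ, i ≤ n → ∀ (j : Fin n) (ω : Ω), |a n j ω - p| ≤ 1 := by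
    intro n hn j ω
    rcases h01 n hn j ω with h | h <;> rw [h, abs_le] <;> constructor <;> linarith
  have hYm : ∀ n : ℕ, i ≤ n → ∀ j : Fin n,
      Measurable (fun ω => (a n j ω - p) * cst n (j : ℕ)) := fun n hn j =>
    ((hmeas n hn j).sub measurable_const).mul_const _
  have hYb : ∀ n : ℕ, i ≤ n → ∀ (j : Fin n) (ω : Ω),
      |(a n j ω - p) * cst n (j : ℕ)| ≤ 1 := by
    intro n hn j ω
    rw [abs_mul]
    exact mul_le_one₀ (habs n hn j ω) (abs_nonneg _) (Real.abs_sin_le_one _)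
  have hYz : ∀ n : ℕ, i ≤ n → ∀ j : Fin n,
      ∫ ω, (a n j ω - p) * cst n (j : ℕ) ∂ℙ = 0 := by
    intro n hn j
    have hia : ∫ ω, a n j ω ∂ℙ = p :=
      integral_bernoulli (hmeas n hn j) (h01 n hn j) hp0.le (hbern n hn j)
    have hint : Integrable (a n j) ℙ := by
      refine aux_integrable (hmeas n hn j) (C := 1) fun ω => ?_
      rcases h01 n hn j ω with h | h <;> rw [h] <;> norm_num
    rw [integral_mul_const, integral_sub hint (integrable_const p), hia, integral_const]
    simp
  have hYind : ∀ n : ℕ, i ≤ n →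
      ProbabilityTheory.iIndepFun
        (fun j ω => (a n j ω - p) * cst n (j : ℕ)) ℙ := by
    intro n hn
    exact (hind n hn).comp (fun j x => (x - p) * cst n (j : ℕ))
      (fun j => (measurable_id.sub measurable_const).mul_const _)
  have hmom : ∀ n : ℕ, i ≤ n →
      ∫ ω, T n ω ^ 4 ∂ℙ ≤ 3 * (n : ℝ) ^ 2 + n := by
    intro n hn
    have := (moment_bound (μ := ℙ) (hYm n hn) (hYb n hn) (hYz n hn) (hYind n hn)
      Finset.univ).2
    simpa [hT, Finset.card_univ] using this
  have hTmeas : ∀ n : ℕ, i ≤ n → Measurable (T n) := by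
    intro n hn
    exact Finset.measurable_sum _ fun j _ => hYm n hn j
  have hTbound : ∀ n : ℕ, i ≤ n → ∀ ω, |T n ω| ≤ (n : ℝ) := by
    intro n hn ω
    calc |T n ω| ≤ ∑ j : Fin n, |(a n j ω - p) * cst n (j : ℕ)| :=
          Finset.abs_sum_le_sum_abs _ _
      _ ≤ ∑ _j : Fin n, (1 : ℝ) := Finset.sum_le_sum fun j _ => hYb n hn j ω
      _ = (n : ℝ) := by simp
  -- Borel–Cantelli for each accuracy level k
  have main : ∀ k : ℕ, ∀ᵐ ω ∂ℙ,
      ∀ᶠ n in atTop, ¬(i ≤ n ∧ (n : ℝ) * p / ((k : ℝ) + 1) ≤ |T n ω|) := by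
    intro k
    set C : ℝ := 4 * ((k : ℝ) + 1) ^ 4 / p ^ 4 with hC
    have hCpos : 0 < C := by positivity
    have hbound : ∀ n : ℕ,
        ℙ {ω | i ≤ n ∧ (n : ℝ) * p / ((k : ℝ) + 1) ≤ |T n ω|}
          ≤ ENNReal.ofReal (C / (n : ℝ) ^ 2) := by
      intro n
      by_cases hn : i ≤ n
      · have hn1 : (1 : ℝ) ≤ (n : ℝ) := by exact_mod_cast le_trans hi hn
        have hseteq : {ω | i ≤ n ∧ (n : ℝ) * p / ((k : ℝ) + 1) ≤ |T n ω|}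
            = {ω | (n : ℝ) * p / ((k : ℝ) + 1) ≤ |T n ω|} := by
          ext ω; simp [hn]
        have hb : (0 : ℝ) < (n : ℝ) * p / ((k : ℝ) + 1) := by positivity
        have hint4 : Integrable (fun ω => T n ω ^ 4) ℙ := by
          refine aux_integrable ((hTmeas n hn).pow_const 4) (C := (n : ℝ) ^ 4) fun ω => ?_
          rw [abs_pow]
          exact pow_le_pow_left₀ (abs_nonneg _) (hTbound n hn ω) 4
        have hmar := markov4 (μ := ℙ) hint4 (hmom n hn) _ hb
        rw [hseteq]
        refine hmar.trans (ENNReal.ofReal_le_ofReal ?_)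
        rw [div_le_div_iff₀ (by positivity) (by positivity)]
        have hkey : C * ((n : ℝ) * p / ((k : ℝ) + 1)) ^ 4 = 4 * (n : ℝ) ^ 4 := by
          rw [hC]; field_simp
        rw [hkey]
        have hcube : (n : ℝ) ^ 3 ≤ (n : ℝ) ^ 4 :=
          pow_le_pow_right₀ hn1 (by norm_num)
        nlinarith [hcube]
      · have hempty : {ω | i ≤ n ∧ (n : ℝ) * p / ((k : ℝ) + 1) ≤ |T n ω|} = ∅ := by
          ext ω; simp [hn]
        rw [hempty, measure_empty]
        exact zero_le
    have hsumR : Summable (fun n : ℕ => C / (n : ℝ) ^ 2) := by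
      have h2 := (Real.summable_one_div_nat_pow.mpr one_lt_two).mul_left C
      refine h2.congr fun n => ?_
      rw [mul_one_div]
    have htsum : ∑' n : ℕ, ℙ {ω | i ≤ n ∧ (n : ℝ) * p / ((k : ℝ) + 1) ≤ |T n ω|} ≠ ⊤ := by
      refine ne_top_of_le_ne_top ?_ (ENNReal.tsum_le_tsum hbound)
      rw [← ENNReal.ofReal_tsum_of_nonneg (fun n => by positivity) hsumR]
      exact ENNReal.ofReal_ne_top
    have hae := MeasureTheory.ae_eventually_notMem
      (s := fun n => {ω | i ≤ n ∧ (n : ℝ) * p / ((k : ℝ) + 1) ≤ |T n ω|}) htsum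
    filter_upwards [hae] with ω hω
    exact hω
  rw [← MeasureTheory.ae_all_iff] at main
  filter_upwards [main] with ω hω
  rw [NormedAddCommGroup.tendsto_nhds_zero]
  intro ε hε
  obtain ⟨k, hk⟩ := exists_nat_one_div_lt hε
  filter_upwards [hω k, eventually_ge_atTop i, eventually_ge_atTop 1] with n h1 h2 h3
  have hTlt : |T n ω| < (n : ℝ) * p / ((k : ℝ) + 1) := by
    by_contra hcon
    exact h1 ⟨h2, not_lt.mp hcon⟩
  have hn1 : (1 : ℝ) ≤ (n : ℝ) := by exact_mod_cast h3
  have hnp : (0 : ℝ) < (n : ℝ) * p := by positivity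
  have hexpr : ((n : ℝ) * p)⁻¹ * ∑ j : Fin n,
      a n j ω * Real.sin (2 * Real.pi * q * (((j : ℕ) : ℝ) + 1 - i) / n)
      = ((n : ℝ) * p)⁻¹ * T n ω := by
    rw [hTf n h3 ω]
  rw [Real.norm_eq_abs, hexpr, abs_mul, abs_of_nonneg (le_of_lt (inv_pos.mpr hnp))]
  calc ((n : ℝ) * p)⁻¹ * |T n ω| < ((n : ℝ) * p)⁻¹ * ((n : ℝ) * p / ((k : ℝ) + 1)) :=
        mul_lt_mul_of_pos_left hTlt (inv_pos.mpr hnp)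
    _ = 1 / ((k : ℝ) + 1) := by field_simp
    _ < ε := hk
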